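/- If A^μ lies strictly inside the forward light cone (A₀ > 0 and A₀² > A₁²+A₂²+A₃²), and B = diag(B₀,−B₁,−B₂,−B₃) with B₀ > B_i and B₁, B₂, B₃ pairwise distinct and A₁, A₂, A₃ all nonzero, then V has at least two distinct nontrivial critical points on the forward light cone. -/

import Mathlib

open Matrix

/-- The Minkowski metric diag(1,−1,−1,−1). -/
noncomputable def eta : Matrix (Fin 4) (Fin 4) ℝ :=
  Matrix.diagonal ![1, -1, -1, -1]

open Filter Topology Set

noncomputable def gf (A : Fin 4 → ℝ) (B₀ : ℝ) (Bs : Fin 3 → ℝ) (lam : ℝ) : ℝ :=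
  (∑ i : Fin 3, (A i.succ)^2 / (Bs i - lam)^2) - (A 0)^2 / (B₀ - lam)^2

lemma term_contAt {a b x : ℝ} (h : b - x ≠ 0) :
    ContinuousAt (fun lam => a^2 / (b - lam)^2) x :=
  ContinuousAt.div continuousAt_const
    (((continuousAt_const.sub continuousAt_id)).pow 2) (pow_ne_zero 2 h)

lemma gf_contAt {A : Fin 4 → ℝ} {B₀ : ℝ} {Bs : Fin 3 → ℝ} {x : ℝ}
    (h0 : B₀ - x ≠ 0) (h : ∀ i, Bs i - x ≠ 0) : ContinuousAt (gf A B₀ Bs) x := by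
  unfold gf
  have hs : ContinuousAt (fun lam => ∑ i : Fin 3, (A i.succ)^2 / (Bs i - lam)^2) x :=
    tendsto_finset_sum _ (fun i _ => (term_contAt (h i)).tendsto)
  exact hs.sub (term_contAt h0)

lemma term_blow {a b : ℝ} (ha : a ≠ 0) :
    Tendsto (fun lam => a^2 / (b - lam)^2) (𝓝[≠] b) atTop := by
  have h1 : Tendsto (fun lam => (b - lam)^2) (𝓝[≠] b) (𝓝[>] 0) := by
    rw [tendsto_nhdsWithin_iff]
    constructor
    · have hc : ContinuousAt (fun lam : ℝ => (b - lam)^2) b :=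
        ((continuousAt_const.sub continuousAt_id)).pow 2
      have h2 : Tendsto (fun lam : ℝ => (b - lam)^2) (𝓝[≠] b) (𝓝 ((b - b)^2)) :=
        hc.tendsto.mono_left nhdsWithin_le_nhds
      simpa using h2
    · filter_upwards [self_mem_nhdsWithin] with x hx
      have hbx : b - x ≠ 0 := sub_ne_zero.2 (Ne.symm hx)
      rw [Set.mem_Ioi]
      positivity
  have h2 := h1.inv_tendsto_nhdsGT_zero
  have ha2 : (0:ℝ) < a^2 := by positivity
  have h3 := h2.const_mul_atTop ha2
  refine h3.congr fun x => ?_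
  simp [div_eq_mul_inv]

lemma ratio_tendsto (b0 b : ℝ) : Tendsto (fun lam => (b0 - lam)/(b - lam)) atBot (𝓝 1) := by
  have h1 : Tendsto (fun lam : ℝ => b - lam) atBot atTop :=
    (tendsto_const_nhds.add_atTop tendsto_neg_atBot_atTop).congr (fun x => by ring)
  have h2 : Tendsto (fun lam : ℝ => (b0 - b)/(b - lam)) atBot (𝓝 0) :=
    tendsto_const_nhds.div_atTop h1
  have h3 := (tendsto_const_nhds (x := (1:ℝ))).add h2
  rw [add_zero] at h3
  refine h3.congr' ?_
  filter_upwards [eventually_lt_atBot b] with x hx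
  have hb : b - x ≠ 0 := sub_ne_zero.2 (ne_of_gt hx)
  field_simp
  ring

lemma gf_atBot (A : Fin 4 → ℝ) (B₀ : ℝ) (Bs : Fin 3 → ℝ) :
    Tendsto (fun lam => (B₀ - lam)^2 * gf A B₀ Bs lam) atBot
      (𝓝 ((∑ i : Fin 3, (A i.succ)^2) - (A 0)^2)) := by
  have hterm : ∀ i : Fin 3, Tendsto
      (fun lam => (A i.succ)^2 * ((B₀ - lam)/(Bs i - lam))^2) atBot (𝓝 ((A i.succ)^2)) := by
    intro i
    have h := ((ratio_tendsto B₀ (Bs i)).pow 2).const_mul ((A i.succ)^2)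
    simpa using h
  have hsum := tendsto_finset_sum Finset.univ (fun i _ => hterm i)
  have hmain := hsum.sub (tendsto_const_nhds (x := (A 0)^2))
  refine hmain.congr' ?_
  filter_upwards [eventually_lt_atBot B₀] with x hx
  have h0 : B₀ - x ≠ 0 := sub_ne_zero.2 (ne_of_gt hx)
  unfold gf
  rw [mul_sub, Finset.mul_sum]
  congr 1
  · exact Finset.sum_congr rfl fun i _ => by rw [div_pow]; ring
  · field_simp

lemma exists_two_roots (A : Fin 4 → ℝ) (hA0 : 0 < A 0)
    (hAin : (A 1)^2 + (A 2)^2 + (A 3)^2 < (A 0)^2)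
    (B₀ : ℝ) (Bs : Fin 3 → ℝ) (hB : ∀ i, Bs i < B₀)
    (hdist : Function.Injective Bs) (hA : ∀ i : Fin 3, A i.succ ≠ 0) :
    ∃ lam1 lam2 : ℝ, lam1 < lam2 ∧ lam1 < B₀ ∧ lam2 < B₀ ∧
      (∀ i, Bs i - lam1 ≠ 0) ∧ (∀ i, Bs i - lam2 ≠ 0) ∧
      gf A B₀ Bs lam1 = 0 ∧ gf A B₀ Bs lam2 = 0 := by
  obtain ⟨j, -, hj⟩ := Finset.exists_min_image Finset.univ Bs ⟨0, Finset.mem_univ 0⟩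
  obtain ⟨k, -, hk⟩ := Finset.exists_max_image Finset.univ Bs ⟨0, Finset.mem_univ 0⟩
  replace hj : ∀ i, Bs j ≤ Bs i := fun i => hj i (Finset.mem_univ i)
  replace hk : ∀ i, Bs i ≤ Bs k := fun i => hk i (Finset.mem_univ i)
  -- blowup of gf at each pole (from within the punctured neighborhood)
  have blow : ∀ (m : Fin 3) (l : Filter ℝ), l ≤ 𝓝[≠] (Bs m) → l ≤ 𝓝 (Bs m) →
      Tendsto (gf A B₀ Bs) l atTop := by
    intro m l hl hl'
    have hdecomp : ∀ x, gf A B₀ Bs x =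
        ((∑ i ∈ Finset.univ.erase m, (A i.succ)^2/(Bs i - x)^2) - (A 0)^2/(B₀-x)^2)
          + (A m.succ)^2/(Bs m - x)^2 := by
      intro x
      unfold gf
      rw [← Finset.add_sum_erase _ _ (Finset.mem_univ m)]
      ring
    have hrest : ContinuousAt (fun x => (∑ i ∈ Finset.univ.erase m,
        (A i.succ)^2/(Bs i - x)^2) - (A 0)^2/(B₀-x)^2) (Bs m) := by
      refine ContinuousAt.sub ?_ (term_contAt (sub_ne_zero.2 (ne_of_gt (hB m))))
      exact tendsto_finset_sum _ (fun i hi => (term_contAt (sub_ne_zero.2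
        (hdist.ne (Finset.ne_of_mem_erase hi)))).tendsto)
    have h1 := (hrest.tendsto.mono_left hl').add_atTop ((term_blow (hA m)).mono_left hl)
    exact h1.congr fun x => (hdecomp x).symm
  have hblowL : Tendsto (gf A B₀ Bs) (𝓝[<] (Bs j)) atTop :=
    blow j _ (nhdsWithin_mono _ fun x hx => ne_of_lt hx) nhdsWithin_le_nhds
  have hblowR : Tendsto (gf A B₀ Bs) (𝓝[>] (Bs k)) atTop :=
    blow k _ (nhdsWithin_mono _ fun x hx => ne_of_gt hx) nhdsWithin_le_nhds
  -- gf → -∞ at B₀ from the left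
  have hbot : Tendsto (gf A B₀ Bs) (𝓝[<] B₀) atBot := by
    have hsum : ContinuousAt (fun x => ∑ i : Fin 3, (A i.succ)^2/(Bs i - x)^2) B₀ :=
      tendsto_finset_sum _ (fun i _ => (term_contAt (sub_ne_zero.2 (ne_of_lt (hB i)))).tendsto)
    have hneg : Tendsto (fun x => -((A 0)^2/(B₀ - x)^2)) (𝓝[<] B₀) atBot :=
      tendsto_neg_atTop_atBot.comp ((term_blow (ne_of_gt hA0)).mono_left
        (nhdsWithin_mono _ fun x hx => ne_of_lt hx))
    have h1 := (hsum.tendsto.mono_left nhdsWithin_le_nhds).add_atBot hneg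
    refine h1.congr fun x => ?_
    unfold gf; ring
  -- the sum identity
  have hS : (∑ i : Fin 3, (A i.succ)^2) = (A 1)^2 + (A 2)^2 + (A 3)^2 := by
    rw [Fin.sum_univ_three]; rfl
  -- point c with gf c < 0, c < Bs j
  have hlim := gf_atBot A B₀ Bs
  rw [hS] at hlim
  have hev := hlim.eventually_lt_const (u := 0) (by linarith)
  obtain ⟨c, hc1, hc2⟩ := (hev.and (eventually_lt_atBot (Bs j))).exists
  have hcB : c < B₀ := lt_trans hc2 (hB j)
  have hgc : gf A B₀ Bs c < 0 := by
    have hp : (0:ℝ) < (B₀ - c)^2 := by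
      have : B₀ - c ≠ 0 := sub_ne_zero.2 (ne_of_gt hcB)
      positivity
    nlinarith [hc1]
  -- point d ∈ (c, Bs j) with gf d > 0
  have : (𝓝[<] (Bs j)).NeBot := nhdsLT_neBot _
  obtain ⟨d, hd1, hd2⟩ := ((hblowL.eventually (eventually_gt_atTop 0)).and
    (Filter.eventually_mem_set.2 (Ioo_mem_nhdsLT_of_mem ⟨hc2, le_rfl⟩))).exists
  -- IVT for first root
  have hcont1 : ContinuousOn (gf A B₀ Bs) (Icc c d) := by
    intro x hx
    have hxj : x < Bs j := lt_of_le_of_lt hx.2 hd2.2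
    exact (gf_contAt (sub_ne_zero.2 (ne_of_gt (lt_trans hxj (hB j))))
      (fun i => sub_ne_zero.2 (ne_of_gt (lt_of_lt_of_le hxj (hj i))))).continuousWithinAt
  obtain ⟨lam1, hmem1, hroot1⟩ := intermediate_value_Ioo (le_of_lt hd2.1) hcont1 ⟨hgc, hd1⟩
  have hlam1j : lam1 < Bs j := lt_trans hmem1.2 hd2.2
  -- second root
  set m := (Bs k + B₀)/2 with hm
  have hm1 : Bs k < m := by simp only [hm]; linarith [hB k]
  have hm2 : m < B₀ := by simp only [hm]; linarith [hB k]
  have : (𝓝[>] (Bs k)).NeBot := nhdsGT_neBot _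
  obtain ⟨c', hc'1, hc'2⟩ := ((hblowR.eventually (eventually_gt_atTop 0)).and
    (Filter.eventually_mem_set.2 (Ioo_mem_nhdsGT_of_mem ⟨le_rfl, hm1⟩))).exists
  have : (𝓝[<] B₀).NeBot := nhdsLT_neBot _
  obtain ⟨d', hd'1, hd'2⟩ := ((hbot.eventually (eventually_lt_atBot 0)).and
    (Filter.eventually_mem_set.2 (Ioo_mem_nhdsLT_of_mem ⟨hm2, le_rfl⟩))).exists
  have hcd' : c' < d' := lt_trans hc'2.2 hd'2.1
  have hcont2 : ContinuousOn (gf A B₀ Bs) (Icc c' d') := by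
    intro x hx
    have hxk : Bs k < x := lt_of_lt_of_le hc'2.1 hx.1
    have hxB : x < B₀ := lt_of_le_of_lt hx.2 hd'2.2
    exact (gf_contAt (sub_ne_zero.2 (ne_of_gt hxB))
      (fun i => sub_ne_zero.2 (ne_of_lt (lt_of_le_of_lt (hk i) hxk)))).continuousWithinAt
  obtain ⟨lam2, hmem2, hroot2⟩ := intermediate_value_Ioo' (le_of_lt hcd') hcont2 ⟨hd'1, hc'1⟩
  have hlam2k : Bs k < lam2 := lt_trans hc'2.1 hmem2.1
  refine ⟨lam1, lam2, ?_, ?_, ?_, ?_, ?_, hroot1, hroot2⟩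
  · exact lt_of_lt_of_le hlam1j (le_trans (hj k) (le_of_lt hlam2k))
  · exact lt_trans hlam1j (hB j)
  · exact lt_trans hmem2.2 hd'2.2
  · exact fun i => sub_ne_zero.2 (ne_of_gt (lt_of_lt_of_le hlam1j (hj i)))
  · exact fun i => sub_ne_zero.2 (ne_of_lt (lt_of_le_of_lt (hk i) hlam2k))

lemma crit_eqs (A : Fin 4 → ℝ) (B₀ : ℝ) (Bs : Fin 3 → ℝ) (lam : ℝ)
    (hA0 : 0 < A 0) (hlt : lam < B₀) (hne : ∀ i, Bs i - lam ≠ 0)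
    (hroot : gf A B₀ Bs lam = 0) :
    let r : Fin 4 → ℝ := ![A 0/(B₀-lam), A 1/(Bs 0-lam), A 2/(Bs 1-lam), A 3/(Bs 2-lam)]
    0 < r 0 ∧ r ⬝ᵥ eta.mulVec r = 0 ∧
      (eta * (Matrix.diagonal ![B₀, -(Bs 0), -(Bs 1), -(Bs 2)]) * eta).mulVec r
        - lam • eta.mulVec r = eta.mulVec A := by
  intro r
  have h0 : B₀ - lam ≠ 0 := sub_ne_zero.2 (ne_of_gt hlt)
  have h1 := hne 0
  have h2 := hne 1
  have h3 := hne 2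
  have hroot' : (A 1)^2/(Bs 0 - lam)^2 + (A 2)^2/(Bs 1-lam)^2 + (A 3)^2/(Bs 2-lam)^2
      - (A 0)^2/(B₀-lam)^2 = 0 := by
    have h := hroot; unfold gf at h; rw [Fin.sum_univ_three] at h; exact h
  refine ⟨?_, ?_, ?_⟩
  · show 0 < A 0 / (B₀ - lam)
    exact div_pos hA0 (sub_pos.2 hlt)
  · show _ = (0:ℝ)
    simp [eta, dotProduct, Matrix.mulVec_diagonal, Fin.sum_univ_four, r]
    simp only [div_eq_mul_inv, ← inv_pow] at hroot'
    linear_combination -hroot'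
  · funext i
    fin_cases i <;>
      simp [eta, Matrix.diagonal_mul_diagonal, Matrix.mulVec_diagonal, r] <;>
      field_simp <;> ring

/-- if A^μ lies strictly inside the forward light cone,
B = diag(B₀,−B₁,−B₂,−B₃) with B₀ > Bᵢ and B₁, B₂, B₃ pairwise distinct and all
Aᵢ ≠ 0, then V has at least two distinct nontrivial critical points (points of
the forward light cone satisfying the Lagrange equations) on the cone. -/
theorem stmt12 (A : Fin 4 → ℝ) (hA0 : 0 < A 0)
    (hAin : (A 1) ^ 2 + (A 2) ^ 2 + (A 3) ^ 2 < (A 0) ^ 2)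
    (B₀ : ℝ) (Bs : Fin 3 → ℝ) (hB : ∀ i, Bs i < B₀)
    (hdist : Function.Injective Bs) (hA : ∀ i : Fin 3, A i.succ ≠ 0) :
    let Bup : Matrix (Fin 4) (Fin 4) ℝ :=
      Matrix.diagonal ![B₀, -(Bs 0), -(Bs 1), -(Bs 2)]
    let crit : (Fin 4 → ℝ) → Prop := fun r =>
      0 < r 0 ∧ r ⬝ᵥ eta.mulVec r = 0 ∧
        ∃ lam : ℝ, (eta * Bup * eta).mulVec r - lam • eta.mulVec r = eta.mulVec A
    ∃ r r' : Fin 4 → ℝ, crit r ∧ crit r' ∧ r ≠ r' := by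
  intro Bup crit
  obtain ⟨lam1, lam2, h12, h1B, h2B, hne1, hne2, hr1, hr2⟩ :=
    exists_two_roots A hA0 hAin B₀ Bs hB hdist hA
  obtain ⟨h1pos, h1cone, h1eq⟩ := crit_eqs A B₀ Bs lam1 hA0 h1B hne1 hr1
  obtain ⟨h2pos, h2cone, h2eq⟩ := crit_eqs A B₀ Bs lam2 hA0 h2B hne2 hr2
  refine ⟨_, _, ⟨h1pos, h1cone, lam1, h1eq⟩, ⟨h2pos, h2cone, lam2, h2eq⟩, ?_⟩
  intro hcontra
  have h := congrFun hcontra 0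
  simp only [Matrix.cons_val_zero] at h
  have hb2 : (0:ℝ) < B₀ - lam2 := sub_pos.2 h2B
  have hbb : B₀ - lam2 < B₀ - lam1 := by linarith
  exact absurd h (ne_of_lt (div_lt_div_of_pos_left hA0 hb2 hbb))
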